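/- The differential operator 𝔡 = −d²/dx² + 2(x³ + b x)d/dx − ((4m+2)x² − b) maps the space of odd polynomials of degree at most 2m+1 into itself. -/
import Mathlib


open Polynomial

/-- The operator 𝔡 = −d²/dx² + 2(x³ + b x)d/dx − ((4m+2)x² − b). -/
noncomputable def sexticOpOdd (m : ℕ) (b : ℂ) (Q : Polynomial ℂ) : Polynomial ℂ :=
  -(Q.derivative.derivative) + 2 * (X ^ 3 + C b * X) * Q.derivative
    - (C (4 * (m : ℂ) + 2) * X ^ 2 - C b) * Q

lemma coeff_comp_neg_X (p : Polynomial ℂ) (n : ℕ) :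
    (p.comp (-X)).coeff n = (-1) ^ n * p.coeff n := by
  induction p using Polynomial.induction_on with
  | C a => simp [Polynomial.coeff_C]; aesop
  | add p q hp hq => simp [hp, hq]; ring
  | monomial k a _ =>
      have : (Polynomial.C a * X ^ (k+1)).comp (-X)
          = Polynomial.C (a * (-1)^(k+1)) * X ^ (k+1) := by
        rw [Polynomial.mul_comp, Polynomial.C_comp, Polynomial.pow_comp, Polynomial.X_comp,
          neg_pow, map_mul, map_pow, map_neg, map_one]
        ring
      rw [this, Polynomial.coeff_C_mul, Polynomial.coeff_C_mul, Polynomial.coeff_X_pow]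
      by_cases h : n = k + 1 <;> simp [h] <;> ring

/-- 𝔡 maps odd polynomials of degree ≤ 2m+1 into odd polynomials of degree ≤ 2m+1. -/
theorem stmt2 (m : ℕ) (b : ℂ) (Q : Polynomial ℂ)
    (hodd : Q.comp (-X) = -Q) (hdeg : Q.degree ≤ (2 * m + 1 : ℕ)) :
    (sexticOpOdd m b Q).comp (-X) = -(sexticOpOdd m b Q) ∧
      (sexticOpOdd m b Q).degree ≤ (2 * m + 1 : ℕ) := by
  have hQ : ∀ n, Even n → Q.coeff n = 0 := by
    intro n hn
    have h1 := coeff_comp_neg_X Q n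
    rw [hodd, Polynomial.coeff_neg, hn.neg_one_pow, one_mul] at h1
    have : 2 * Q.coeff n = 0 := by linear_combination -h1
    simpa using this
  have hQd : ∀ n, 2*m+1 < n → Q.coeff n = 0 := fun n hn =>
    Polynomial.coeff_eq_zero_of_degree_lt (lt_of_le_of_lt hdeg (by exact_mod_cast hn))
  constructor
  · have hder : Q.derivative.comp (-X) = Q.derivative := by
      have := congrArg Polynomial.derivative hodd
      rw [Polynomial.derivative_comp] at this
      simp only [Polynomial.derivative_neg, Polynomial.derivative_X] at this
      rw [neg_one_mul, neg_eq_iff_eq_neg] at this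
      simpa using this
    have hder2 : Q.derivative.derivative.comp (-X) = -Q.derivative.derivative := by
      have := congrArg Polynomial.derivative hder
      rw [Polynomial.derivative_comp] at this
      simp only [Polynomial.derivative_neg, Polynomial.derivative_X] at this
      rw [neg_one_mul, neg_eq_iff_eq_neg] at this
      simpa using this
    unfold sexticOpOdd
    simp only [Polynomial.add_comp, Polynomial.sub_comp, Polynomial.mul_comp,
      Polynomial.neg_comp, Polynomial.pow_comp, Polynomial.X_comp, Polynomial.C_comp,
      Polynomial.ofNat_comp, hodd, hder, hder2]
    push_cast
    ring
  · rw [Polynomial.degree_le_iff_coeff_zero]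
    intro n hn
    have hn' : 2*m+1 < n := by exact_mod_cast hn
    unfold sexticOpOdd
    have hC2 : (2 : Polynomial ℂ) = C 2 := by
      rw [show (2:ℂ) = ((1:ℂ)+1) by norm_num, map_add, map_one]; norm_num
    rw [show (2 : Polynomial ℂ) * (X ^ 3 + C b * X) * Q.derivative
        = C 2 * (X^3 * Q.derivative) + C (2*b) * (X^1 * Q.derivative) by
          rw [hC2, Polynomial.C_mul]; ring,
      show (C (4*(m:ℂ)+2) * X ^ 2 - C b) * Q = C (4*(m:ℂ)+2) * (X^2*Q) - C b * Q by ring]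
    simp only [Polynomial.coeff_add, Polynomial.coeff_sub, Polynomial.coeff_neg,
      Polynomial.coeff_C_mul, Polynomial.coeff_X_pow_mul']
    have hd2 : Q.derivative.derivative.coeff n = 0 := by
      rw [Polynomial.coeff_derivative, Polynomial.coeff_derivative, hQd (n+2) (by omega)]
      ring
    have hd1 : n ≥ 1 → Q.derivative.coeff (n-1) = 0 := by
      intro h
      rw [Polynomial.coeff_derivative, show n - 1 + 1 = n by omega, hQd n hn']
      ring
    have hQn : Q.coeff n = 0 := hQd n hn'
    rcases Nat.lt_or_ge n 3 with h3 | h3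
    · -- n = 2, m = 0
      have hn2 : n = 2 := by omega
      have hm0 : m = 0 := by omega
      subst hn2 hm0
      norm_num [hd2, hd1 (by norm_num), hQn, hQ 0 (by decide)]
    · obtain ⟨k, rfl⟩ : ∃ k, n = k + 3 := ⟨n - 3, by omega⟩
      rw [if_pos (by omega), if_pos (by omega), if_pos (by omega)]
      have e1 : k + 3 - 3 = k := by omega
      have e2 : k + 3 - 1 = k + 2 := by omega
      have e3 : k + 3 - 2 = k + 1 := by omega
      have hd1' : Q.derivative.coeff (k+2) = 0 := by
        rw [Polynomial.coeff_derivative, hQd (k+3) (by omega)]; ring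
      rw [e1, e2, e3, hd2, hd1', hQn, Polynomial.coeff_derivative]
      have hcoef : (2 * (k:ℂ) - 4 * m) * Q.coeff (k+1) = 0 := by
        rcases Nat.lt_trichotomy (k+1) (2*m+1) with h | h | h
        · have hk : k + 1 = 2 * m := by omega
          rw [hk, hQ (2*m) ⟨m, by ring⟩, mul_zero]
        · have hk : (k : ℂ) = 2 * m := by
            have : k = 2 * m := by omega
            exact_mod_cast congrArg (Nat.cast : ℕ → ℂ) this
          rw [hk]; ring
        · rw [hQd (k+1) (by omega), mul_zero]
      push_cast at hcoef ⊢
      linear_combination hcoef
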